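/- For nonzero z ∈ F_8, the F_2-linear span (under symmetric difference) of O_z = {X ⊆ F_8 : |X| = 4, Σ_{x∈X} x = z} consists exactly of the 16 sets: ∅, F_8, the 8 elements of O_z, the three lines through 0 containing z (i.e., the three 2-dimensional F_2-subspaces of F_8 containing z), and the complements of these three lines. -/

import Mathlib

open scoped Classical
noncomputable section

abbrev F8 := GaloisField 2 3

instance : Fintype F8 := Fintype.ofFinite F8

/-- The indicator function of a subset of `F8`, as a vector in `F₂⁸`. -/
def ind (S : Set F8) : F8 → ZMod 2 := fun w => if w ∈ S then 1 else 0

open scoped Classical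
noncomputable section

abbrev G3 := Fin 3 → ZMod 2

def z₀ : G3 := ![1, 0, 0]

/-- indicator with Finset domain (computable instances used in `decide`) -/
def indF (S : Finset G3) : G3 → ZMod 2 := fun w => if w ∈ S then 1 else 0

def indG (S : Set G3) : G3 → ZMod 2 := fun w => if w ∈ S then 1 else 0

lemma indG_coe (X : Finset G3) : indG ↑X = indF X := by
  funext w; simp [indG, indF]

lemma indF_injective : Function.Injective indF := by
  intro X Y h
  ext w
  have := congrFun h w
  simp only [indF] at this
  by_cases hX : w ∈ X <;> by_cases hY : w ∈ Y <;> simp_all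

-- x + x = 0 in a ZMod 2 module
lemma add_self_zmod2 {M : Type*} [AddCommGroup M] [Module (ZMod 2) M] (x : M) :
    x + x = 0 := by
  have h2 : ((1 : ZMod 2) + 1) = 0 := by decide
  calc x + x = ((1 : ZMod 2) + 1) • x := by rw [add_smul, one_smul]
  _ = 0 := by rw [h2, zero_smul]

lemma indF_symmDiff (X Y : Finset G3) : indF (symmDiff X Y) = indF X + indF Y := by
  funext w
  simp only [indF, Pi.add_apply, Finset.mem_symmDiff]
  by_cases hX : w ∈ X <;> by_cases hY : w ∈ Y <;> simp [hX, hY]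
  exact (by decide : (0 : ZMod 2) = 1 + 1)

instance : Std.Commutative (α := Finset G3) symmDiff := ⟨symmDiff_comm⟩
instance : Std.Associative (α := Finset G3) symmDiff := ⟨symmDiff_assoc⟩

def sdAll (T : Finset (Finset G3)) : Finset G3 := T.fold symmDiff ∅ id

lemma sum_indF (T : Finset (Finset G3)) : ∑ X ∈ T, indF X = indF (sdAll T) := by
  classical
  induction T using Finset.induction_on with
  | empty => funext w; simp [sdAll, indF]
  | insert _ _ h ih =>
      rename_i X T'
      rw [Finset.sum_insert h, ih, ← indF_symmDiff]
      congr 1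
      simp [sdAll, Finset.fold_insert h]

-- span of a finite set over ZMod 2 = subset sums
lemma mem_span_iff_subset_sum {M : Type*} [AddCommGroup M] [Module (ZMod 2) M]
    (s : Finset M) (x : M) :
    x ∈ Submodule.span (ZMod 2) (s : Set M) ↔
      ∃ t ∈ s.powerset, x = ∑ y ∈ t, y := by
  classical
  constructor
  · intro hx
    let p : Submodule (ZMod 2) M :=
      { carrier := {x | ∃ t ∈ s.powerset, x = ∑ y ∈ t, y}
        zero_mem' := ⟨∅, by simp⟩
        add_mem' := by
          rintro a b ⟨t₁, ht₁, rfl⟩ ⟨t₂, ht₂, rfl⟩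
          refine ⟨symmDiff t₁ t₂, ?_, ?_⟩
          · rw [Finset.mem_powerset] at *
            intro y hy
            rw [Finset.mem_symmDiff] at hy
            rcases hy with ⟨h, _⟩ | ⟨h, _⟩
            exacts [ht₁ h, ht₂ h]
          · have hdisj : Disjoint (symmDiff t₁ t₂) (t₁ ∩ t₂) := by
              rw [Finset.disjoint_left]
              intro y hy hy2
              rw [Finset.mem_symmDiff] at hy
              rw [Finset.mem_inter] at hy2
              tauto
            have h1 : symmDiff t₁ t₂ ∪ t₁ ∩ t₂ = t₁ ∪ t₂ := by
              ext y
              rw [Finset.mem_union, Finset.mem_symmDiff, Finset.mem_inter,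
                Finset.mem_union]
              tauto
            have h2 := Finset.sum_union (f := fun y : M => y) hdisj
            rw [h1] at h2
            have h3 : ∑ y ∈ t₁ ∪ t₂, y + ∑ y ∈ t₁ ∩ t₂, y
                = ∑ y ∈ t₁, y + ∑ y ∈ t₂, y := Finset.sum_union_inter
            have h4 : ∀ m : M, m + m = 0 := fun m => by
              have h2' : ((1 : ZMod 2) + 1) = 0 := by decide
              calc m + m = ((1 : ZMod 2) + 1) • m := by rw [add_smul, one_smul]
              _ = 0 := by rw [h2', zero_smul]
            calc ∑ y ∈ t₁, y + ∑ y ∈ t₂, y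
                = ∑ y ∈ t₁ ∪ t₂, y + ∑ y ∈ t₁ ∩ t₂, y := h3.symm
              _ = (∑ y ∈ symmDiff t₁ t₂, y + ∑ y ∈ t₁ ∩ t₂, y) + ∑ y ∈ t₁ ∩ t₂, y := by
                  rw [← h2]
              _ = ∑ y ∈ symmDiff t₁ t₂, y + (∑ y ∈ t₁ ∩ t₂, y + ∑ y ∈ t₁ ∩ t₂, y) := by
                  rw [add_assoc]
              _ = ∑ y ∈ symmDiff t₁ t₂, y := by rw [h4, add_zero]
        smul_mem' := by
          intro c x hx
          rcases (by decide : ∀ c : ZMod 2, c = 0 ∨ c = 1) c with rfl | rfl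
          · simpa using ⟨∅, by simp⟩
          · simpa using hx }
    have hs : (s : Set M) ⊆ p := by
      intro y hy
      exact ⟨{y}, by simpa using hy, by simp⟩
    exact Submodule.span_le.mpr hs hx
  · rintro ⟨t, ht, rfl⟩
    rw [Finset.mem_powerset] at ht
    exact Submodule.sum_mem _ fun y hy => Submodule.subset_span (ht hy)
def Oz4 : Finset (Finset G3) :=
  Finset.univ.filter (fun X : Finset G3 => X.card = 4 ∧ ∑ x ∈ X, x = z₀)

def lineCond (S : Finset G3) : Prop :=
  S.card = 4 ∧ (0 : G3) ∈ S ∧ z₀ ∈ S ∧ ∀ a ∈ S, ∀ b ∈ S, a + b ∈ S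

instance : DecidablePred lineCond := fun S => by unfold lineCond; infer_instance

def lineF : Finset (Finset G3) := Finset.univ.filter lineCond

def R4 : Finset (Finset G3) :=
  insert ∅ (insert Finset.univ (Oz4 ∪ lineF ∪ lineF.image (·ᶜ)))

set_option maxRecDepth 100000 in
set_option maxHeartbeats 4000000 in
lemma key_eq : Oz4.powerset.image sdAll = R4 := by decide
lemma card_four_of_finrank_two (L : Submodule (ZMod 2) G3)
    (hL : Module.finrank (ZMod 2) L = 2) : Nat.card L = 4 := by
  have h := Module.card_eq_pow_finrank (K := ZMod 2) (V := L)
  rw [hL, ZMod.card] at h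
  rw [Nat.card_eq_fintype_card, h]; norm_num

lemma lineCond_iff (g : G3 → ZMod 2) :
    (∃ S : Finset G3, lineCond S ∧ (g = indF S ∨ g = indF Sᶜ)) ↔
      (∃ L : Submodule (ZMod 2) G3, Module.finrank (ZMod 2) L = 2 ∧ z₀ ∈ L ∧
        (g = indG ↑L ∨ g = indG ((↑L : Set G3)ᶜ))) := by
  constructor
  · rintro ⟨S, ⟨hcard, h0, hz, hadd⟩, hg⟩
    refine ⟨{ carrier := ↑S
              zero_mem' := h0
              add_mem' := fun ha hb => hadd _ ha _ hb
              smul_mem' := by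
                intro c x hx
                rcases (by decide : ∀ c : ZMod 2, c = 0 ∨ c = 1) c with rfl | rfl
                · simpa using h0
                · simpa using hx }, ?_, hz, ?_⟩
    · -- finrank = 2
      set L : Submodule (ZMod 2) G3 :=
        { carrier := ↑S
          zero_mem' := h0
          add_mem' := fun ha hb => hadd _ ha _ hb
          smul_mem' := by
            intro c x hx
            rcases (by decide : ∀ c : ZMod 2, c = 0 ∨ c = 1) c with rfl | rfl
            · simpa using h0
            · simpa using hx } with hLdef
      have hNat : Nat.card L = 4 := by
        have : Nat.card L = Nat.card (↑S : Set G3) := rfl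
        rw [this, Nat.card_coe_set_eq, Set.ncard_coe_finset, hcard]
      have h := Module.card_eq_pow_finrank (K := ZMod 2) (V := L)
      rw [ZMod.card, ← Nat.card_eq_fintype_card, hNat] at h
      have : (2 : ℕ) ^ 2 = 2 ^ Module.finrank (ZMod 2) L := h
      exact (Nat.pow_right_injective (le_refl 2) this).symm
    · rcases hg with rfl | rfl
      · left; funext w; simp [indF, indG]
      · right; funext w; simp [indF, indG]
  · rintro ⟨L, hrank, hz, hg⟩
    refine ⟨(L : Set G3).toFinset, ⟨?_, ?_, ?_, ?_⟩, ?_⟩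
    · have := card_four_of_finrank_two L hrank
      rw [Set.toFinset_card, ← Nat.card_eq_fintype_card]
      exact this
    · simp
    · simpa using hz
    · intro a ha b hb
      rw [Set.mem_toFinset] at *
      exact L.add_mem ha hb
    · rcases hg with rfl | rfl
      · left; funext w; simp [indF, indG]
      · right; funext w; simp [indF, indG]
lemma indF_empty : indF ∅ = 0 := by funext w; simp [indF]
lemma indF_univ : indF Finset.univ = indG Set.univ := by funext w; simp [indF, indG]

lemma step1 (g : G3 → ZMod 2) :
    (∃ t ∈ (Oz4.image indF).powerset, g = ∑ y ∈ t, y) ↔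
      ∃ T ∈ Oz4.powerset, g = indF (sdAll T) := by
  constructor
  · rintro ⟨t, ht, rfl⟩
    rw [Finset.mem_powerset] at ht
    refine ⟨Oz4.filter (fun X => indF X ∈ t),
      Finset.mem_powerset.2 (Finset.filter_subset _ _), ?_⟩
    have htT : t = (Oz4.filter (fun X => indF X ∈ t)).image indF := by
      ext y; simp only [Finset.mem_image, Finset.mem_filter]
      constructor
      · intro hy
        obtain ⟨X, hX, rfl⟩ := Finset.mem_image.1 (ht hy)
        exact ⟨X, ⟨hX, hy⟩, rfl⟩
      · rintro ⟨X, ⟨hX, hXt⟩, rfl⟩; exact hXt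
    conv_lhs => rw [htT]
    rw [Finset.sum_image (fun a _ b _ h => indF_injective h), sum_indF]
  · rintro ⟨T, hT, rfl⟩
    rw [Finset.mem_powerset] at hT
    refine ⟨T.image indF, Finset.mem_powerset.2
      ((Finset.image_subset_image hT).trans (le_refl _)), ?_⟩
    rw [Finset.sum_image (fun a _ b _ h => indF_injective h), sum_indF]

lemma step2 (g : G3 → ZMod 2) :
    (∃ T ∈ Oz4.powerset, g = indF (sdAll T)) ↔ ∃ S ∈ R4, g = indF S := by
  rw [← key_eq]
  constructor
  · rintro ⟨T, hT, rfl⟩; exact ⟨sdAll T, Finset.mem_image_of_mem _ hT, rfl⟩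
  · rintro ⟨S, hS, rfl⟩
    obtain ⟨T, hT, rfl⟩ := Finset.mem_image.1 hS
    exact ⟨T, hT, rfl⟩

lemma step3 (g : G3 → ZMod 2) :
    (∃ S ∈ R4, g = indF S) ↔
      (g = 0 ∨ g = indG Set.univ ∨
        (∃ X : Finset G3, X.card = 4 ∧ ∑ x ∈ X, x = z₀ ∧ g = indG ↑X) ∨
        ∃ S : Finset G3, lineCond S ∧ (g = indF S ∨ g = indF Sᶜ)) := by
  constructor
  · rintro ⟨S, hS, rfl⟩
    simp only [R4, Finset.mem_insert, Finset.mem_union, Finset.mem_image, lineF, Oz4,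
      Finset.mem_filter, Finset.mem_univ, true_and] at hS
    rcases hS with rfl | rfl | (⟨h1, h2⟩ | hS) | ⟨S', hS', rfl⟩
    · exact Or.inl indF_empty
    · exact Or.inr (Or.inl indF_univ)
    · exact Or.inr (Or.inr (Or.inl ⟨S, h1, h2, (indG_coe S).symm⟩))
    · exact Or.inr (Or.inr (Or.inr ⟨S, hS, Or.inl rfl⟩))
    · exact Or.inr (Or.inr (Or.inr ⟨S', hS', Or.inr rfl⟩))
  · rintro (rfl | rfl | ⟨X, h1, h2, rfl⟩ | ⟨S, hS, rfl | rfl⟩)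
    · exact ⟨∅, by simp [R4], indF_empty.symm⟩
    · exact ⟨Finset.univ, by simp [R4], indF_univ.symm⟩
    · exact ⟨X, by simp [R4, Oz4, Finset.mem_filter, h1, h2], indG_coe X⟩
    · exact ⟨S, by simp [R4, lineF, Finset.mem_filter, hS], rfl⟩
    · refine ⟨Sᶜ, ?_, rfl⟩
      simp only [R4, Finset.mem_insert, Finset.mem_union, Finset.mem_image, lineF,
        Finset.mem_filter, Finset.mem_univ, true_and]
      exact Or.inr (Or.inr (Or.inr ⟨S, hS, rfl⟩))

lemma concrete (g : G3 → ZMod 2) :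
    g ∈ Submodule.span (ZMod 2)
      {f : G3 → ZMod 2 | ∃ X : Finset G3, X.card = 4 ∧ ∑ x ∈ X, x = z₀ ∧ f = indG ↑X} ↔
      (g = 0 ∨ g = indG Set.univ ∨
        (∃ X : Finset G3, X.card = 4 ∧ ∑ x ∈ X, x = z₀ ∧ g = indG ↑X) ∨
        ∃ L : Submodule (ZMod 2) G3, Module.finrank (ZMod 2) L = 2 ∧ z₀ ∈ L ∧
          (g = indG ↑L ∨ g = indG ((↑L : Set G3)ᶜ))) := by
  have hset : {f : G3 → ZMod 2 | ∃ X : Finset G3, X.card = 4 ∧ ∑ x ∈ X, x = z₀ ∧ f = indG ↑X}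
      = ↑(Oz4.image indF) := by
    ext f
    simp only [Set.mem_setOf_eq, Finset.coe_image, Set.mem_image, Finset.mem_coe, Oz4,
      Finset.mem_filter, Finset.mem_univ, true_and]
    constructor
    · rintro ⟨X, h1, h2, rfl⟩; exact ⟨X, ⟨h1, h2⟩, (indG_coe X).symm⟩
    · rintro ⟨X, ⟨h1, h2⟩, rfl⟩; exact ⟨X, h1, h2, (indG_coe X).symm⟩
  rw [hset, mem_span_iff_subset_sum, step1, step2, step3, lineCond_iff]
theorem span_outer_sets_description (z : F8) (hz : z ≠ 0) :
    let Oz : Set (F8 → ZMod 2) :=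
      {f | ∃ X : Finset F8, X.card = 4 ∧ ∑ x ∈ X, x = z ∧ f = ind X}
    ∀ f : F8 → ZMod 2, f ∈ Submodule.span (ZMod 2) Oz ↔
      (f = 0 ∨ f = ind Set.univ ∨ f ∈ Oz ∨
        ∃ L : Submodule (ZMod 2) F8, Module.finrank (ZMod 2) L = 2 ∧ z ∈ L ∧
          (f = ind L ∨ f = ind ((L : Set F8)ᶜ))) := by
  intro Oz f
  have hOzdef : Oz = {f | ∃ X : Finset F8, X.card = 4 ∧ ∑ x ∈ X, x = z ∧ f = ind X} := rfl
  -- Build a linear equivalence e : F8 ≃ₗ[ZMod 2] G3 with e z = z₀.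
  have hli : LinearIndepOn (ZMod 2) id ({z} : Set F8) :=
    (linearIndepOn_singleton_iff (ZMod 2)).2 hz
  let b : Module.Basis _ (ZMod 2) F8 := Module.Basis.extend hli
  haveI : Fintype (hli.extend (Set.subset_univ _)) := FiniteDimensional.fintypeBasisIndex b
  have hzmem : z ∈ hli.extend (Set.subset_univ _) := hli.subset_extend _ rfl
  have hcard : Fintype.card (hli.extend (Set.subset_univ ({z} : Set F8))) = 3 := by
    rw [← Module.finrank_eq_card_basis b]
    exact GaloisField.finrank 2 (n := 3) (by norm_num)
  let κe : _ ≃ Fin 3 := Equiv.setValue (Fintype.equivFinOfCardEq hcard) ⟨z, hzmem⟩ 0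
  let b' := b.reindex κe
  let e : F8 ≃ₗ[ZMod 2] G3 := b'.equivFun
  have hez : e z = z₀ := by
    have h0 : b' 0 = z := by
      have hsymm : κe.symm 0 = ⟨z, hzmem⟩ := by
        rw [Equiv.symm_apply_eq]
        exact (Equiv.setValue_eq _ _ _).symm
      have h1 : b' 0 = b (κe.symm 0) := b.reindex_apply κe 0
      rw [h1, hsymm]
      exact Module.Basis.extend_apply_self hli ⟨z, hzmem⟩
    rw [← h0]
    funext j
    show b'.equivFun (b' 0) j = z₀ j
    rw [Module.Basis.equivFun_self]
    fin_cases j <;> rfl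
  -- Transport structure
  let Φ : (F8 → ZMod 2) ≃ₗ[ZMod 2] (G3 → ZMod 2) :=
    LinearEquiv.funCongrLeft (ZMod 2) (ZMod 2) e.toEquiv.symm
  have hΦapp : ∀ h : F8 → ZMod 2, Φ h = h ∘ e.symm := fun h => rfl
  have hind : ∀ S : Set F8, Φ (ind S) = indG (⇑e.symm ⁻¹' S) := fun S => rfl
  have hpre1 : ∀ X : Finset F8, ⇑e.symm ⁻¹' (↑X : Set F8) = ↑(X.image e) := by
    intro X; ext w
    simp only [Set.mem_preimage, Finset.coe_image, Set.mem_image, Finset.mem_coe]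
    constructor
    · intro h; exact ⟨e.symm w, h, by simp⟩
    · rintro ⟨x, hx, rfl⟩; simpa using hx
  have hpre2 : ∀ L : Submodule (ZMod 2) F8,
      ⇑e.symm ⁻¹' (↑L : Set F8) = ↑(L.map (e : F8 →ₗ[ZMod 2] G3)) := by
    intro L; ext w
    simp only [Set.mem_preimage, SetLike.mem_coe, Submodule.mem_map]
    constructor
    · intro h; exact ⟨e.symm w, h, by simp⟩
    · rintro ⟨x, hx, rfl⟩; simpa using hx
  have hpre3 : ∀ L' : Submodule (ZMod 2) G3,
      ⇑e.symm ⁻¹' (↑(L'.map (e.symm : G3 →ₗ[ZMod 2] F8)) : Set F8) = ↑L' := by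
    intro L'; ext w
    simp only [Set.mem_preimage, SetLike.mem_coe, Submodule.mem_map]
    constructor
    · rintro ⟨x, hx, h⟩
      have : x = w := e.symm.injective h
      rwa [← this]
    · intro h; exact ⟨w, h, rfl⟩
  have hspan : f ∈ Submodule.span (ZMod 2) Oz ↔
      Φ f ∈ Submodule.span (ZMod 2) (⇑Φ '' Oz) := by
    rw [Submodule.span_image_linearEquiv]
    constructor
    · intro h; exact Submodule.mem_map_of_mem h
    · intro h
      rcases Submodule.mem_map.1 h with ⟨y, hy, hyf⟩
      rwa [← Φ.injective hyf]
  have himg : ⇑Φ '' Oz =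
      {g : G3 → ZMod 2 | ∃ X : Finset G3, X.card = 4 ∧ ∑ x ∈ X, x = z₀ ∧ g = indG ↑X} := by
    ext g
    simp only [hOzdef, Set.mem_image, Set.mem_setOf_eq]
    constructor
    · rintro ⟨h, ⟨X, h1, h2, rfl⟩, rfl⟩
      refine ⟨X.image e, ?_, ?_, ?_⟩
      · rw [Finset.card_image_of_injective _ e.injective, h1]
      · rw [Finset.sum_image (fun a _ b _ hab => e.injective hab), ← map_sum, h2, hez]
      · rw [hind, hpre1]
    · rintro ⟨X', h1, h2, rfl⟩
      refine ⟨ind ↑(X'.image e.symm), ⟨X'.image e.symm, ?_, ?_, rfl⟩, ?_⟩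
      · rw [Finset.card_image_of_injective _ e.symm.injective, h1]
      · rw [Finset.sum_image (fun a _ b _ hab => e.symm.injective hab), ← map_sum, h2,
          ← hez, e.symm_apply_apply]
      · rw [hind, hpre1]
        congr 1
        rw [Finset.image_image]
        norm_cast
        ext w
        simp
  have h0iff : f = 0 ↔ Φ f = 0 :=
    ⟨fun h => by rw [h, map_zero], fun h => by
      have := Φ.injective (h.trans (map_zero Φ).symm); exact this⟩
  have huniviff : f = ind Set.univ ↔ Φ f = indG Set.univ := by
    constructor
    · intro h; rw [h, hind, Set.preimage_univ]
    · intro h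
      apply Φ.injective
      rw [hind, Set.preimage_univ]; exact h
  have hOzmem : f ∈ Oz ↔ Φ f ∈
      {g : G3 → ZMod 2 | ∃ X : Finset G3, X.card = 4 ∧ ∑ x ∈ X, x = z₀ ∧ g = indG ↑X} := by
    rw [← himg]
    exact ⟨fun h => Set.mem_image_of_mem _ h, fun h => by
      rcases h with ⟨y, hy, hyf⟩
      rwa [← Φ.injective hyf]⟩
  have hsubiff : (∃ L : Submodule (ZMod 2) F8, Module.finrank (ZMod 2) L = 2 ∧ z ∈ L ∧
        (f = ind L ∨ f = ind ((L : Set F8)ᶜ))) ↔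
      (∃ L : Submodule (ZMod 2) G3, Module.finrank (ZMod 2) L = 2 ∧ z₀ ∈ L ∧
        (Φ f = indG ↑L ∨ Φ f = indG ((↑L : Set G3)ᶜ))) := by
    constructor
    · rintro ⟨L, hr, hzL, hfL⟩
      refine ⟨L.map (e : F8 →ₗ[ZMod 2] G3), ?_, ?_, ?_⟩
      · rw [LinearEquiv.finrank_map_eq, hr]
      · rw [← hez]; exact Submodule.mem_map_of_mem hzL
      · rcases hfL with rfl | rfl
        · left; rw [hind, hpre2]
        · right; rw [hind, Set.preimage_compl, hpre2]
    · rintro ⟨L', hr, hzL', hfL⟩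
      refine ⟨L'.map (e.symm : G3 →ₗ[ZMod 2] F8), ?_, ?_, ?_⟩
      · rw [LinearEquiv.finrank_map_eq, hr]
      · exact Submodule.mem_map.2 ⟨z₀, hzL', by rw [← hez]; simp⟩
      · rcases hfL with h | h
        · left
          apply Φ.injective
          rw [hind, hpre3]; exact h
        · right
          apply Φ.injective
          rw [hind, Set.preimage_compl, hpre3]; exact h
  rw [hspan, himg, concrete (Φ f)]
  exact or_congr h0iff.symm (or_congr huniviff.symm (or_congr hOzmem.symm hsubiff.symm))
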